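/- arXiv:2402.09235 — 2 statements merged into one kernel-verified Lean document; each statement's English description precedes it below -/
import Mathlib

section
/- For every α > 1 there exists a nonempty compact set E ⊆ ℂ such that the Hausdorff dimension of E equals 0 and E satisfies condition (U)_{1,α}. -/
open Metric Set Filter

noncomputable section Stmt18Aux

namespace Stmt18

/-- The scales: `t α n = 2 ^ (-(α ^ n))`. -/
def t (α : ℝ) (n : ℕ) : ℝ := (2 : ℝ) ^ (-(α ^ n))

/-- The ratio `q α = 2 ^ (-(α - 1))`. -/
def q (α : ℝ) : ℝ := (2 : ℝ) ^ (-(α - 1))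

/-- The Cantor-type map. -/
def g (α : ℝ) (ε : ℕ → Bool) : ℝ := ∑' n, if ε n then t α n else 0

variable {α : ℝ} (hα : 1 < α)

lemma t_pos (n : ℕ) : 0 < t α n := Real.rpow_pos_of_pos two_pos _

lemma q_pos : 0 < q α := Real.rpow_pos_of_pos two_pos _

lemma term_nonneg (ε : ℕ → Bool) (n : ℕ) : 0 ≤ (if ε n then t α n else 0) := by
  split <;> simp [(t_pos (α := α) n).le]

lemma term_le (ε : ℕ → Bool) (n : ℕ) : (if ε n then t α n else 0) ≤ t α n := by
  split <;> simp [(t_pos (α := α) n).le]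

include hα

lemma q_lt_one : q α < 1 :=
  Real.rpow_lt_one_of_one_lt_of_neg one_lt_two (by linarith)

lemma exponent_ineq (n j : ℕ) : α ^ n + j * (α - 1) ≤ α ^ (n + j) := by
  have h1 : (1 : ℝ) ≤ α ^ n := one_le_pow₀ hα.le
  have h2 : 1 + (j : ℝ) * (α - 1) ≤ α ^ j := by
    have := one_add_mul_le_pow (a := α - 1) (by linarith) j
    simpa using this
  have h3 : α ^ (n + j) = α ^ n * α ^ j := pow_add α n j
  nlinarith [mul_nonneg (Nat.cast_nonneg j) (by linarith : (0:ℝ) ≤ α - 1)]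

lemma t_le (n j : ℕ) : t α (n + j) ≤ t α n * q α ^ j := by
  have key : t α n * q α ^ j = (2 : ℝ) ^ (-(α ^ n) + (-(α - 1)) * j) := by
    rw [Real.rpow_add two_pos, t, q, ← Real.rpow_natCast ((2:ℝ) ^ (-(α-1))) j,
      ← Real.rpow_mul (by norm_num)]
  rw [key, t]
  apply Real.rpow_le_rpow_of_exponent_le one_le_two
  have := exponent_ineq hα n j
  linarith

lemma summable_t : Summable (t α) := by
  have : Summable (fun j => t α 0 * q α ^ j) :=
    (summable_geometric_of_lt_one (q_pos).le (q_lt_one hα)).mul_left _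
  exact this.of_nonneg_of_le (fun n => (t_pos n).le) (fun j => by simpa using t_le hα 0 j)

lemma summable_term (ε : ℕ → Bool) : Summable (fun n => if ε n then t α n else 0) :=
  (summable_t hα).of_nonneg_of_le (term_nonneg ε) (term_le ε)

/-- Points agreeing below `n` are within `t α n * (1 - q α)⁻¹`. -/
lemma diff_le (ε ε' : ℕ → Bool) (n : ℕ) (h : ∀ k < n, ε k = ε' k) :
    |g α ε - g α ε'| ≤ t α n * (1 - q α)⁻¹ := by
  set D : ℕ → ℝ := fun k => (if ε k then t α k else 0) - (if ε' k then t α k else 0) with hD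
  have hsum : Summable D := (summable_term hα ε).sub (summable_term hα ε')
  have hgd : g α ε - g α ε' = ∑' k, D k :=
    (Summable.tsum_sub (summable_term hα ε) (summable_term hα ε')).symm
  have hzero : ∀ k < n, D k = 0 := by
    intro k hk; simp [hD, h k hk]
  have htail : ∑' k, D k = ∑' j, D (j + n) := by
    rw [← Summable.sum_add_tsum_nat_add n hsum,
      Finset.sum_eq_zero (fun k hk => hzero k (Finset.mem_range.1 hk)), zero_add]
  have hDb : ∀ j, |D (j + n)| ≤ t α n * q α ^ j := by
    intro j
    have h1 : |D (j + n)| ≤ t α (j + n) := by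
      rw [abs_sub_le_iff]
      constructor
      · have := term_le (α := α) ε (j + n); have := term_nonneg (α := α) ε' (j + n)
        show (if ε (j+n) then t α (j+n) else 0) - (if ε' (j+n) then t α (j+n) else 0) ≤ _
        linarith
      · have := term_le (α := α) ε' (j + n); have := term_nonneg (α := α) ε (j + n)
        show (if ε' (j+n) then t α (j+n) else 0) - (if ε (j+n) then t α (j+n) else 0) ≤ _
        linarith
    calc |D (j + n)| ≤ t α (j + n) := h1
      _ = t α (n + j) := by rw [add_comm]
      _ ≤ t α n * q α ^ j := t_le hα n j
  have hsum2 : Summable (fun j => |D (j + n)|) :=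
    (((summable_geometric_of_lt_one (q_pos).le (q_lt_one hα)).mul_left (t α n))).of_nonneg_of_le
      (fun j => abs_nonneg _) hDb
  have hsum3 : Summable (fun j => t α n * q α ^ j) :=
    (summable_geometric_of_lt_one (q_pos).le (q_lt_one hα)).mul_left _
  calc |g α ε - g α ε'| = |∑' j, D (j + n)| := by rw [hgd, htail]
    _ ≤ ∑' j, |D (j + n)| := by
        simpa [Real.norm_eq_abs] using norm_tsum_le_tsum_norm (f := fun j => D (j + n)) (by
          simpa [Real.norm_eq_abs] using hsum2)
    _ ≤ ∑' j, t α n * q α ^ j := hsum2.tsum_le_tsum hDb hsum3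
    _ = t α n * (1 - q α)⁻¹ := by
        rw [tsum_mul_left, tsum_geometric_of_lt_one (q_pos).le (q_lt_one hα)]

/-- Flipping coordinate `n` moves the point by exactly `t α n`. -/
lemma flip_dist (ε : ℕ → Bool) (n : ℕ) :
    |g α (Function.update ε n (!ε n)) - g α ε| = t α n := by
  set ε' := Function.update ε n (!ε n) with hε'
  have hgd : g α ε' - g α ε =
      ∑' k, ((if ε' k then t α k else 0) - (if ε k then t α k else 0)) :=
    (Summable.tsum_sub (summable_term hα ε') (summable_term hα ε)).symm
  have hsingle : ∑' k, ((if ε' k then t α k else 0) - (if ε k then t α k else 0)) =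
      (if ε' n then t α n else 0) - (if ε n then t α n else 0) := by
    apply tsum_eq_single
    intro k hk
    simp [hε', Function.update_of_ne hk]
  rw [hgd, hsingle, hε']
  rcases Bool.eq_false_or_eq_true (ε n) with h | h <;>
    simp [h, abs_of_nonneg (t_pos (α := α) n).le, abs_of_nonpos, neg_nonpos,
      (t_pos (α := α) n).le]

/-- tendsto of `t` to zero. -/
lemma t_tendsto : Tendsto (t α) atTop (nhds 0) := by
  apply squeeze_zero (fun n => (t_pos n).le) (fun n => by simpa using t_le hα 0 n)
  have := tendsto_pow_atTop_nhds_zero_of_lt_one (q_pos (α := α)).le (q_lt_one hα)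
  simpa using this.const_mul (t α 0)

/-- The scale selection lemma. -/
lemma exists_scale {r : ℝ} (hr0 : 0 < r) (hr1 : r < t α 0) :
    ∃ n, r ^ α ≤ t α n ∧ t α n ≤ r := by
  have hex : ∃ n, t α n ≤ r := by
    obtain ⟨n, hn⟩ := exists_pow_lt_of_lt_one (div_pos hr0 (t_pos 0)) (q_lt_one hα)
    refine ⟨n, ?_⟩
    have h1 : t α n ≤ t α 0 * q α ^ n := by simpa using t_le hα 0 n
    have h2 : t α 0 * q α ^ n < t α 0 * (r / t α 0) :=
      mul_lt_mul_of_pos_left hn (t_pos 0)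
    rw [mul_div_cancel₀ _ (t_pos (α := α) 0).ne'] at h2
    linarith
  classical
  set N := Nat.find hex with hN
  have hNle : t α N ≤ r := Nat.find_spec hex
  have hN1 : N ≠ 0 := by
    intro h
    rw [h] at hNle
    exact absurd hNle (not_le.2 hr1)
  obtain ⟨M, hM⟩ := Nat.exists_eq_succ_of_ne_zero hN1
  have hMlt : r < t α M := by
    have := Nat.find_min hex (m := M) (by omega)
    push_neg at this
    linarith
  refine ⟨N, ?_, hNle⟩
  have hrα : r ^ α ≤ t α M ^ α :=
    Real.rpow_le_rpow hr0.le hMlt.le (by linarith)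
  have ht : t α M ^ α = t α N := by
    rw [t, t, ← Real.rpow_mul (by norm_num : (0:ℝ) ≤ 2)]
    congr 1
    rw [hM, pow_succ]
    ring
  linarith [hrα, ht.le, ht.ge]

/-- `g` is continuous. -/
lemma g_continuous : Continuous (g α) := by
  apply continuous_tsum (u := t α) ?_ (summable_t hα) ?_
  · intro n
    exact (continuous_of_discreteTopology (α := Bool)
      (f := fun b => if b then t α n else 0)).comp (continuous_apply n)
  · intro n ε
    rw [Real.norm_eq_abs, abs_of_nonneg (term_nonneg ε n)]
    exact term_le ε n

lemma pow_ge_linear {M : ℝ} (hM : 0 ≤ M) : ∀ᶠ n : ℕ in atTop, M * n ≤ α ^ n := by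
  set β := Real.sqrt α with hβdef
  have hβ : 1 < β := by
    rw [hβdef, show (1:ℝ) = Real.sqrt 1 by simp]
    exact Real.sqrt_lt_sqrt (by norm_num) (by linarith)
  have hsq : β ^ 2 = α := Real.sq_sqrt (by linarith)
  filter_upwards [(tendsto_pow_atTop_atTop_of_one_lt hβ).eventually_ge_atTop (M / (β - 1))]
    with n hn
  have hb1 : (n : ℝ) * (β - 1) ≤ β ^ n := by
    have := one_add_mul_le_pow (a := β - 1) (by linarith) n
    have : 1 + (n:ℝ) * (β - 1) ≤ β ^ n := by simpa using this
    linarith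
  have hα' : α ^ n = β ^ n * β ^ n := by
    rw [← hsq, ← pow_mul, two_mul, pow_add]
  rw [hα']
  have hβ1 : β - 1 ≠ 0 := by linarith
  have h1 : M / (β - 1) * ((n : ℝ) * (β - 1)) = M * n := by
    field_simp
  calc M * (n : ℝ) = M / (β - 1) * ((n : ℝ) * (β - 1)) := h1.symm
    _ ≤ β ^ n * β ^ n := by
        apply mul_le_mul hn hb1 (mul_nonneg (Nat.cast_nonneg n) (by linarith)) (by positivity)

lemma tendsto_L {d c : ℝ} (hd : 0 < d) (hc : 0 < c) :
    Tendsto (fun n : ℕ => (2:ℝ) ^ n * (t α n * c) ^ d) atTop (nhds 0) := by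
  have heq : ∀ n : ℕ, (2:ℝ) ^ n * (t α n * c) ^ d
      = c ^ d * (2:ℝ) ^ ((n : ℝ) - α ^ n * d) := by
    intro n
    rw [Real.mul_rpow (t_pos n).le hc.le, t, ← Real.rpow_mul (by norm_num : (0:ℝ) ≤ 2),
      ← Real.rpow_natCast 2 n, ← mul_assoc, ← Real.rpow_add two_pos, mul_comm]
    congr 1
    congr 1
    ring
  simp only [heq]
  have he : Tendsto (fun n : ℕ => (n : ℝ) - α ^ n * d) atTop atBot := by
    apply tendsto_atBot_mono' atTop (f₁ := fun n : ℕ => -(n : ℝ))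
    · filter_upwards [pow_ge_linear hα (M := 2 / d) (div_nonneg (by norm_num) hd.le)] with n hn
      have hd' : d ≠ 0 := hd.ne'
      have h := mul_le_mul_of_nonneg_right hn hd.le
      have heq2 : 2 / d * (n:ℝ) * d = 2 * n := by field_simp
      rw [heq2] at h
      linarith
    · exact tendsto_neg_atBot_iff.2 tendsto_natCast_atTop_atTop
  have h2 : Tendsto (fun n : ℕ => (2:ℝ) ^ ((n : ℝ) - α ^ n * d)) atTop (nhds 0) :=
    (tendsto_rpow_atBot_of_base_gt_one 2 one_lt_two).comp he
  simpa using h2.const_mul (c ^ d)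

/-- The Cantor set as a subset of `ℂ`. -/
def E (α : ℝ) : Set ℂ := Set.range (fun ε : ℕ → Bool => ((g α ε : ℝ) : ℂ))

lemma measure_zero {d : ℝ} (hd : 0 < d) :
    MeasureTheory.Measure.hausdorffMeasure (X := ℂ) d (E α) = 0 := by
  classical
  set K : ℝ := (1 - q α)⁻¹ with hK
  have hK0 : 0 < K := by
    rw [hK]
    exact inv_pos.2 (by linarith [q_lt_one hα])
  set f : (ℕ → Bool) → ℂ := fun ε => ((g α ε : ℝ) : ℂ) with hf
  set T : ∀ n : ℕ, (Fin n → Bool) → Set ℂ :=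
    fun n σ => f '' {ε | ∀ k : Fin n, ε k = σ k} with hT
  set r : ℕ → ENNReal := fun n => ENNReal.ofReal (t α n * K) with hr
  have hrt : Tendsto r atTop (nhds 0) := by
    rw [show (0 : ENNReal) = ENNReal.ofReal 0 by simp]
    exact ENNReal.tendsto_ofReal (by simpa using (t_tendsto hα).mul_const K)
  have hdiam : ∀ n σ, EMetric.diam (T n σ) ≤ r n := by
    intro n σ
    apply EMetric.diam_le
    rintro x ⟨ε, hε, rfl⟩ y ⟨ε', hε', rfl⟩
    rw [edist_dist, hf]
    simp only
    rw [Complex.isometry_ofReal.dist_eq, Real.dist_eq]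
    apply ENNReal.ofReal_le_ofReal
    apply diff_le hα
    intro k hk
    exact (hε ⟨k, hk⟩).trans (hε' ⟨k, hk⟩).symm
  have hcov : ∀ n, E α ⊆ ⋃ σ, T n σ := by
    rintro n x ⟨ε, rfl⟩
    exact Set.mem_iUnion.2 ⟨fun k => ε k, ⟨ε, fun k => rfl, rfl⟩⟩
  have hmain := MeasureTheory.Measure.hausdorffMeasure_le_liminf_sum d (E α) r hrt T
    (Filter.Eventually.of_forall hdiam) (Filter.Eventually.of_forall hcov)
  have hbound : ∀ n : ℕ, (∑ σ : Fin n → Bool, EMetric.diam (T n σ) ^ d)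
      ≤ ENNReal.ofReal ((2:ℝ) ^ n * (t α n * K) ^ d) := by
    intro n
    calc (∑ σ : Fin n → Bool, EMetric.diam (T n σ) ^ d)
        ≤ ∑ _σ : Fin n → Bool, (r n) ^ d :=
          Finset.sum_le_sum fun σ _ => ENNReal.rpow_le_rpow (hdiam n σ) hd.le
      _ = (Fintype.card (Fin n → Bool)) * (r n) ^ d := by
          rw [Finset.sum_const, Finset.card_univ, nsmul_eq_mul]
      _ = ENNReal.ofReal ((2:ℝ) ^ n * (t α n * K) ^ d) := by
          rw [hr]
          rw [ENNReal.ofReal_rpow_of_pos (mul_pos (t_pos n) hK0)]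
          rw [ENNReal.ofReal_mul (by positivity)]
          congr 1
          rw [ENNReal.ofReal_pow (by norm_num : (0:ℝ) ≤ 2)]
          simp [Fintype.card_fun]
  have hlim : Tendsto (fun n : ℕ => ENNReal.ofReal ((2:ℝ) ^ n * (t α n * K) ^ d))
      atTop (nhds 0) := by
    rw [show (0 : ENNReal) = ENNReal.ofReal 0 by simp]
    exact ENNReal.tendsto_ofReal (tendsto_L hα hd hK0)
  have : Filter.liminf (fun n : ℕ => ∑ σ : Fin n → Bool, EMetric.diam (T n σ) ^ d) atTop
      ≤ 0 := by
    calc Filter.liminf (fun n : ℕ => ∑ σ : Fin n → Bool, EMetric.diam (T n σ) ^ d) atTop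
        ≤ Filter.liminf (fun n : ℕ => ENNReal.ofReal ((2:ℝ) ^ n * (t α n * K) ^ d)) atTop :=
          Filter.liminf_le_liminf (Filter.Eventually.of_forall hbound)
      _ = 0 := hlim.liminf_eq
  exact le_antisymm (hmain.trans this) zero_le

end Stmt18

end Stmt18Aux

open Metric Set

/-- A set `E ⊆ ℂ` satisfies condition `(U)_{1,α}`. -/
def CondU1 (E : Set ℂ) (α : ℝ) : Prop :=
  ∃ C > (0 : ℝ), ∃ r₀ > (0 : ℝ), ∀ a ∈ E, ∀ r ∈ Set.Ioo (0 : ℝ) r₀,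
    ({z : ℂ | C * r ^ α ≤ dist z a ∧ dist z a ≤ r} ∩ E).Nonempty

/-- For every `α > 1` there is a nonempty compact set `E ⊆ ℂ` of Hausdorff
dimension `0` satisfying condition `(U)_{1,α}`. -/
theorem stmt_18 (α : ℝ) (hα : 1 < α) :
    ∃ E : Set ℂ, E.Nonempty ∧ IsCompact E ∧ dimH E = 0 ∧ CondU1 E α := by
  refine ⟨Stmt18.E α, ⟨_, Set.mem_range_self (fun _ => false)⟩,
    isCompact_range (Complex.continuous_ofReal.comp (Stmt18.g_continuous hα)), ?_, ?_⟩
  · refine le_antisymm (dimH_le ?_) zero_le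
    intro d' htop
    by_contra hd'
    have hne : d' ≠ 0 := by
      intro h
      exact hd' (by simp [h])
    have hpos : (0 : ℝ) < (d' : ℝ) := by
      exact_mod_cast hne.bot_lt
    have h0 := Stmt18.measure_zero hα (d := (d' : ℝ)) hpos
    rw [h0] at htop
    exact ENNReal.zero_ne_top htop
  · refine ⟨1, one_pos, Stmt18.t α 0, Stmt18.t_pos 0, ?_⟩
    rintro a ⟨ε, rfl⟩ r ⟨hr0, hr1⟩
    obtain ⟨n, h1, h2⟩ := Stmt18.exists_scale hα hr0 hr1
    refine ⟨((Stmt18.g α (Function.update ε n (!ε n)) : ℝ) : ℂ), ⟨?_, ?_⟩,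
      Set.mem_range_self _⟩
    · rw [one_mul, Complex.isometry_ofReal.dist_eq, Real.dist_eq, Stmt18.flip_dist hα]
      exact h1
    · rw [Complex.isometry_ofReal.dist_eq, Real.dist_eq, Stmt18.flip_dist hα]
      exact h2
end

section
/- For every β > 0 there exists a nonempty compact set E ⊆ ℂ such that the Hausdorff dimension of E equals 0 and E satisfies condition (U)_{2,β}. -/
open Metric Set

section AuxAll

open Filter Topology MeasureTheory ENNReal NNReal

section Aux

noncomputable def ell (β : ℝ) (n : ℕ) : ℝ :=
  Real.exp (-(β * ((n : ℝ) + 1) * Real.log ((n : ℝ) + 2)))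

noncomputable def gfun (β : ℝ) (n : ℕ) : ℝ := ell β n - ell β (n + 1)

variable {β : ℝ} (hβ : 0 < β)

lemma ell_pos (n : ℕ) : 0 < ell β n := Real.exp_pos _

lemma log_nat_pos (n : ℕ) : (0 : ℝ) < Real.log ((n : ℝ) + 2) := by
  apply Real.log_pos
  have : (0:ℝ) ≤ (n:ℝ) := Nat.cast_nonneg n
  linarith

include hβ

lemma ell_succ_lt (n : ℕ) : ell β (n + 1) < ell β n := by
  unfold ell
  apply Real.exp_lt_exp.2
  push_cast
  have h1 : Real.log ((n : ℝ) + 2) < Real.log ((n : ℝ) + 3) := by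
    apply Real.log_lt_log (by positivity)
    linarith
  have h2 := log_nat_pos n
  have h3 : ((n:ℝ) + 1 + 2) = (n:ℝ) + 3 := by ring
  rw [h3]
  nlinarith [mul_lt_mul_of_pos_left h1 (show (0:ℝ) < β*((n:ℝ)+1) by positivity),
    mul_pos hβ (h2.trans h1)]

lemma gfun_pos (n : ℕ) : 0 < gfun β n := sub_pos.2 (ell_succ_lt hβ n)

lemma gfun_nonneg (n : ℕ) : 0 ≤ gfun β n := (gfun_pos hβ n).le

lemma sum_range_gfun (n N : ℕ) :
    ∑ k ∈ Finset.range N, gfun β (k + n) = ell β n - ell β (N + n) := by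
  have : ∀ k ∈ Finset.range N, gfun β (k + n)
      = (fun j => ell β (j + n)) k - (fun j => ell β (j + n)) (k + 1) := by
    intro k _
    simp only [gfun]
    congr 2
    omega
  rw [Finset.sum_congr rfl this, Finset.sum_range_sub']
  norm_num

lemma ell_tendsto : Tendsto (ell β) atTop (𝓝 0) := by
  unfold ell
  apply Real.tendsto_exp_atBot.comp
  rw [tendsto_neg_atBot_iff]
  apply tendsto_atTop_mono (f := fun n : ℕ => β * Real.log 2 * (n : ℝ))
  · intro n
    have h2 : Real.log 2 ≤ Real.log ((n : ℝ) + 2) := by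
      apply Real.log_le_log (by norm_num)
      have : (0:ℝ) ≤ (n:ℝ) := Nat.cast_nonneg n
      linarith
    have h3 : (0:ℝ) < Real.log 2 := Real.log_pos (by norm_num)
    have h4 : (0:ℝ) ≤ (n:ℝ) := Nat.cast_nonneg n
    nlinarith [mul_le_mul_of_nonneg_left h2 (show (0:ℝ) ≤ β * (n:ℝ) by positivity),
      mul_pos hβ (lt_of_lt_of_le h3 h2)]
  · exact (tendsto_natCast_atTop_atTop (R := ℝ)).const_mul_atTop
      (by positivity : (0:ℝ) < β * Real.log 2)

lemma hasSum_gfun_tail (n : ℕ) : HasSum (fun k => gfun β (k + n)) (ell β n) := by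
  rw [hasSum_iff_tendsto_nat_of_nonneg (fun k => gfun_nonneg hβ _)]
  simp only [sum_range_gfun hβ]
  have : Tendsto (fun N : ℕ => ell β (N + n)) atTop (𝓝 0) :=
    (ell_tendsto hβ).comp (tendsto_add_atTop_nat n)
  have h2 := (tendsto_const_nhds (x := ell β n)).sub this
  simpa using h2

lemma summable_gfun : Summable (gfun β) := by
  have := (hasSum_gfun_tail hβ 0).summable
  simpa using this

end Aux

section CF

variable {β : ℝ} (hβ : 0 < β)

noncomputable def cfterm (β : ℝ) (n : ℕ) (ε : ℕ → Bool) : ℝ :=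
  if ε n then gfun β n else 0

noncomputable def cf (β : ℝ) (ε : ℕ → Bool) : ℝ := ∑' n, cfterm β n ε

include hβ

lemma cfterm_abs_le (n : ℕ) (ε : ℕ → Bool) : |cfterm β n ε| ≤ gfun β n := by
  unfold cfterm
  rcases ε n with _ | _ <;> simp [abs_of_nonneg, gfun_nonneg hβ n]

lemma summable_cfterm (ε : ℕ → Bool) : Summable (fun n => cfterm β n ε) := by
  apply Summable.of_abs
  exact (summable_gfun hβ).of_nonneg_of_le (fun n => abs_nonneg _)
    (fun n => cfterm_abs_le hβ n ε)

lemma cf_dist_le {ε ε' : ℕ → Bool} {n : ℕ} (h : ∀ k < n, ε k = ε' k) :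
    |cf β ε - cf β ε'| ≤ ell β n := by
  have hs := summable_cfterm hβ ε
  have hs' := summable_cfterm hβ ε'
  rw [cf, cf, ← Summable.tsum_sub hs hs']
  set v : ℕ → ℝ := fun k => if k < n then 0 else gfun β k with hv
  have habs : ∀ k, |cfterm β k ε - cfterm β k ε'| ≤ v k := by
    intro k
    by_cases hk : k < n
    · simp [v, hk, cfterm, h k hk]
    · simp only [v, hk, if_false, cfterm]
      have := gfun_nonneg hβ k
      rcases ε k with _ | _ <;> rcases ε' k with _ | _ <;>
        simp [abs_of_nonneg, abs_of_nonpos, this] <;> linarith [abs_of_nonneg this]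
  have hsv : Summable v := by
    apply (summable_gfun hβ).of_nonneg_of_le
    · intro k; by_cases hk : k < n <;> simp [v, hk, gfun_nonneg hβ k]
    · intro k; by_cases hk : k < n <;> simp [v, hk, gfun_nonneg hβ k]
  have hsabs : Summable (fun k => |cfterm β k ε - cfterm β k ε'|) :=
    hsv.of_nonneg_of_le (fun k => abs_nonneg _) habs
  have hstep1 : |∑' k, (cfterm β k ε - cfterm β k ε')|
      ≤ ∑' k, |cfterm β k ε - cfterm β k ε'| := by
    have := norm_tsum_le_tsum_norm (f := fun k => cfterm β k ε - cfterm β k ε')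
      (by simpa only [Real.norm_eq_abs] using hsabs)
    simpa only [Real.norm_eq_abs] using this
  calc |∑' k, (cfterm β k ε - cfterm β k ε')|
      ≤ ∑' k, |cfterm β k ε - cfterm β k ε'| := hstep1
    _ ≤ ∑' k, v k := Summable.tsum_le_tsum habs hsabs hsv
    _ = ell β n := by
        have h1 : HasSum v (ell β n) := by
          have h2 : HasSum (fun k => v (k + n)) (ell β n) := by
            have : (fun k => v (k + n)) = fun k => gfun β (k + n) := by
              funext k; simp [v, Nat.not_lt.mpr (Nat.le_add_left n k)]
            rw [this]; exact hasSum_gfun_tail hβ n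
          have h3 := (hasSum_nat_add_iff (f := v) n).1 h2
          have h4 : ∑ i ∈ Finset.range n, v i = 0 := by
            apply Finset.sum_eq_zero; intro i hi
            simp [v, Finset.mem_range.1 hi]
          rwa [h4, add_zero] at h3
        exact h1.tsum_eq

def flipAt (ε : ℕ → Bool) (n : ℕ) : ℕ → Bool := fun k => if k = n then !(ε n) else ε k

lemma cf_flip_dist (ε : ℕ → Bool) (n : ℕ) :
    |cf β (flipAt ε n) - cf β ε| = gfun β n := by
  have hs := summable_cfterm hβ (flipAt ε n)
  have hs' := summable_cfterm hβ ε
  rw [cf, cf, ← Summable.tsum_sub hs hs']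
  have h0 : ∀ k, k ≠ n → cfterm β k (flipAt ε n) - cfterm β k ε = 0 := by
    intro k hk; simp [cfterm, flipAt, hk]
  rw [tsum_eq_single n h0]
  simp only [cfterm, flipAt, if_pos rfl]
  rcases hε : ε n with _ | _ <;>
    simp [hε, abs_of_nonneg (gfun_nonneg hβ n), abs_of_nonpos, gfun_nonneg hβ n]

lemma continuous_cf : Continuous (cf β) := by
  apply continuous_tsum (u := gfun β)
  · intro n
    exact Continuous.comp (continuous_of_discreteTopology
      (α := Bool) (β := ℝ) (f := fun b => if b then gfun β n else 0)) (continuous_apply n)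
  · exact summable_gfun hβ
  · intro n ε
    simpa using cfterm_abs_le hβ n ε

end CF

section ESet

variable {β : ℝ} (hβ : 0 < β)

noncomputable def Ffun (β : ℝ) (ε : ℕ → Bool) : ℂ := ((cf β ε : ℝ) : ℂ)

noncomputable def ESet (β : ℝ) : Set ℂ := Set.range (Ffun β)

include hβ

lemma continuous_Ffun : Continuous (Ffun β) :=
  Complex.continuous_ofReal.comp (continuous_cf hβ)

lemma ESet_nonempty : (ESet β).Nonempty := ⟨Ffun β (fun _ => false), ⟨_, rfl⟩⟩

lemma ESet_compact : IsCompact (ESet β) := isCompact_range (continuous_Ffun hβ)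

lemma dist_Ffun (ε ε' : ℕ → Bool) : dist (Ffun β ε) (Ffun β ε') = |cf β ε - cf β ε'| := by
  rw [Ffun, Ffun, Complex.isometry_ofReal.dist_eq, Real.dist_eq]

lemma ESet_dimH : dimH (ESet β) = 0 := by
  refine le_antisymm ?_ (by simp)
  apply dimH_le
  intro d hd
  by_contra hd0
  have hdpos : 0 < d := lt_of_le_of_ne (by simp) (by simpa [eq_comm] using hd0)
  -- show μH[d] (ESet β) = 0, contradicting = ∞
  have hcov : μH[(d:ℝ)] (ESet β) ≤
      liminf (fun n : ℕ => ∑ v : Fin n → Bool,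
        EMetric.diam ((fun w : Fin n → Bool =>
          Ffun β '' {ε | ∀ i : Fin n, ε i = w i}) v) ^ (d:ℝ)) atTop := by
    apply Measure.hausdorffMeasure_le_liminf_sum (d : ℝ) (ESet β)
      (fun n => ENNReal.ofReal (ell β n))
    · have h0 : (0:ℝ≥0∞) = ENNReal.ofReal 0 := by simp
      rw [h0]
      exact (ENNReal.continuous_ofReal.tendsto 0).comp (ell_tendsto hβ)
    · filter_upwards with n
      intro v
      apply EMetric.diam_le
      rintro x ⟨ε, hε, rfl⟩ y ⟨ε', hε', rfl⟩
      rw [edist_dist, dist_Ffun hβ]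
      apply ENNReal.ofReal_le_ofReal
      apply cf_dist_le hβ
      intro k hk
      have := hε ⟨k, hk⟩
      have := hε' ⟨k, hk⟩
      simp only [mem_setOf_eq] at *
      rw [hε ⟨k, hk⟩, hε' ⟨k, hk⟩]
    · filter_upwards with n
      rintro x ⟨ε, rfl⟩
      exact mem_iUnion.2 ⟨fun i => ε i, ⟨ε, fun i => rfl, rfl⟩⟩
  have hbound : ∀ n : ℕ, (∑ v : Fin n → Bool,
      EMetric.diam ((fun w : Fin n → Bool =>
        Ffun β '' {ε | ∀ i : Fin n, ε i = w i}) v) ^ (d:ℝ))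
      ≤ (2:ℝ≥0∞)^n * ENNReal.ofReal (ell β n) ^ (d:ℝ) := by
    intro n
    have hdiam : ∀ v : Fin n → Bool,
        EMetric.diam (Ffun β '' {ε | ∀ i : Fin n, ε i = v i}) ≤ ENNReal.ofReal (ell β n) := by
      intro v
      apply EMetric.diam_le
      rintro x ⟨ε, hε, rfl⟩ y ⟨ε', hε', rfl⟩
      rw [edist_dist, dist_Ffun hβ]
      apply ENNReal.ofReal_le_ofReal
      apply cf_dist_le hβ
      intro k hk
      simp only [mem_setOf_eq] at hε hε'
      rw [hε ⟨k, hk⟩, hε' ⟨k, hk⟩]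
    calc (∑ v : Fin n → Bool, EMetric.diam (Ffun β '' {ε | ∀ i : Fin n, ε i = v i}) ^ (d:ℝ))
        ≤ ∑ _v : Fin n → Bool, ENNReal.ofReal (ell β n) ^ (d:ℝ) := by
          apply Finset.sum_le_sum
          intro v _
          exact ENNReal.rpow_le_rpow (hdiam v) (by positivity)
      _ = (2:ℝ≥0∞)^n * ENNReal.ofReal (ell β n) ^ (d:ℝ) := by
          rw [Finset.sum_const]
          simp [Finset.card_univ, mul_comm]
  -- the bound tends to 0
  have hreal : Tendsto (fun n : ℕ => (2:ℝ)^n * ell β n ^ (d:ℝ)) atTop (𝓝 0) := by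
    have hc : (0:ℝ) < (d:ℝ) * β := by positivity
    have hlogto : Tendsto (fun n : ℕ => Real.log ((n:ℝ) + 2)) atTop atTop :=
      Real.tendsto_log_atTop.comp
        (tendsto_atTop_add_const_right atTop 2 (tendsto_natCast_atTop_atTop (R := ℝ)))
    have hev : ∀ᶠ n : ℕ in atTop, (Real.log 2 + 1) / ((d:ℝ) * β) ≤ Real.log ((n:ℝ) + 2) :=
      hlogto.eventually_ge_atTop _
    apply squeeze_zero' (g := fun n : ℕ => Real.exp (-(n:ℝ)))
    · filter_upwards with n
      have := ell_pos (β := β) n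
      positivity
    · filter_upwards [hev] with n hA
      have hA0 : (0:ℝ) < Real.log ((n:ℝ) + 2) := log_nat_pos n
      have hcA : Real.log 2 + 1 ≤ Real.log ((n:ℝ) + 2) * ((d:ℝ) * β) := (div_le_iff₀ hc).1 hA
      have hform : (2:ℝ)^n * ell β n ^ (d:ℝ)
          = Real.exp ((n:ℝ) * Real.log 2 + -(β * ((n:ℝ)+1) * Real.log ((n:ℝ)+2)) * (d:ℝ)) := by
        have h2n : (2:ℝ)^n = Real.exp ((n:ℝ) * Real.log 2) := by
          rw [mul_comm, Real.exp_mul, Real.exp_log (by norm_num : (0:ℝ) < 2),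
            Real.rpow_natCast]
        have hell : ell β n ^ (d:ℝ)
            = Real.exp (-(β*((n:ℝ)+1)*Real.log ((n:ℝ)+2)) * (d:ℝ)) := by
          rw [ell, ← Real.exp_mul]
        rw [h2n, hell, ← Real.exp_add]
      rw [hform]
      apply Real.exp_le_exp.2
      have hn0 : (0:ℝ) ≤ (n:ℝ) := Nat.cast_nonneg n
      nlinarith [mul_le_mul_of_nonneg_left hcA hn0, mul_pos hc hA0]
    · apply Real.tendsto_exp_atBot.comp
      rw [tendsto_neg_atBot_iff]
      exact tendsto_natCast_atTop_atTop
  have hlim : Tendsto (fun n : ℕ => (2:ℝ≥0∞)^n * ENNReal.ofReal (ell β n) ^ (d:ℝ))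
      atTop (𝓝 0) := by
    have heq : (fun n : ℕ => (2:ℝ≥0∞)^n * ENNReal.ofReal (ell β n) ^ (d:ℝ))
        = fun n : ℕ => ENNReal.ofReal ((2:ℝ)^n * ell β n ^ (d:ℝ)) := by
      funext n
      rw [ENNReal.ofReal_mul (by positivity), ENNReal.ofReal_pow (by norm_num),
        ENNReal.ofReal_rpow_of_pos (ell_pos n)]
      norm_num
    rw [heq]
    have h0 : (0:ℝ≥0∞) = ENNReal.ofReal 0 := by simp
    rw [h0]
    exact (ENNReal.continuous_ofReal.tendsto 0).comp hreal
  have hfin : μH[(d:ℝ)] (ESet β) ≤ 0 := by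
    refine hcov.trans ?_
    calc liminf (fun n : ℕ => ∑ v : Fin n → Bool,
          EMetric.diam ((fun w : Fin n → Bool =>
            Ffun β '' {ε | ∀ i : Fin n, ε i = w i}) v) ^ (d:ℝ)) atTop
        ≤ liminf (fun n : ℕ => (2:ℝ≥0∞)^n * ENNReal.ofReal (ell β n) ^ (d:ℝ)) atTop :=
          liminf_le_liminf (Eventually.of_forall hbound)
      _ = 0 := hlim.liminf_eq
  rw [hd] at hfin
  simp at hfin

end ESet

section Key

variable {β : ℝ} (hβ : 0 < β)

noncomputable def Cconst (β : ℝ) : ℝ :=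
  (1 - Real.exp (-(β * Real.log 3))) * Real.exp (-β) * (β * Real.log 2 / 3) ^ β

include hβ

lemma Cconst_pos : 0 < Cconst β := by
  have h3 : (0:ℝ) < Real.log 3 := Real.log_pos (by norm_num)
  have h2 : (0:ℝ) < Real.log 2 := Real.log_pos (by norm_num)
  have hc0 : Real.exp (-(β * Real.log 3)) < 1 := by
    rw [Real.exp_lt_one_iff]
    nlinarith
  have hq : (0:ℝ) < β * Real.log 2 / 3 := by positivity
  have h4 := Real.rpow_pos_of_pos hq β
  have h5 := Real.exp_pos (-β)
  unfold Cconst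
  have h6 : (0:ℝ) < 1 - Real.exp (-(β * Real.log 3)) := by linarith
  exact mul_pos (mul_pos h6 h5) h4

set_option maxHeartbeats 2000000 in
lemma key_ineq (m : ℕ) {r : ℝ} (hr0 : 0 < r) (hrm : r < ell β m) :
    Cconst β * r * (Real.log (1 / r)) ^ (-β) ≤ gfun β (m + 1) := by
  have hlog2 : (0:ℝ) < Real.log 2 := Real.log_pos (by norm_num)
  have hlog3 : (0:ℝ) < Real.log 3 := Real.log_pos (by norm_num)
  set a2 := Real.log ((m:ℝ) + 2) with ha2def
  set a3 := Real.log ((m:ℝ) + 3) with ha3def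
  set a4 := Real.log ((m:ℝ) + 4) with ha4def
  have hm0 : (0:ℝ) ≤ (m:ℝ) := Nat.cast_nonneg m
  have ha2 : Real.log 2 ≤ a2 := Real.log_le_log (by norm_num) (by linarith)
  have ha23 : a2 ≤ a3 := Real.log_le_log (by linarith) (by linarith)
  have ha34 : a3 ≤ a4 := Real.log_le_log (by linarith) (by linarith)
  have hlog3a4 : Real.log 3 ≤ a4 := Real.log_le_log (by norm_num) (by linarith)
  have ha2pos : (0:ℝ) < a2 := lt_of_lt_of_le hlog2 ha2
  have ha3pos : (0:ℝ) < a3 := lt_of_lt_of_le ha2pos ha23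
  have ha3le : a3 ≤ a2 + 1 / ((m:ℝ) + 2) := by
    have hpos : (0:ℝ) < ((m:ℝ) + 3) / ((m:ℝ) + 2) := by positivity
    have h1 := Real.log_le_sub_one_of_pos hpos
    rw [Real.log_div (by linarith) (by linarith)] at h1
    have hx : ((m:ℝ) + 3) / ((m:ℝ) + 2) - 1 = 1 / ((m:ℝ) + 2) := by
      field_simp
      norm_num
    rw [hx] at h1
    linarith
  set Lm := β * ((m:ℝ) + 1) * a2 with hLmdef
  have hLmpos : 0 < Lm := by positivity
  set t := Real.log (1 / r) with htdef
  have ht : Lm < t := by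
    have h1 : Real.log r < Real.log (ell β m) := Real.log_lt_log hr0 hrm
    rw [ell, Real.log_exp] at h1
    rw [htdef, one_div, Real.log_inv]
    linarith
  have htpos : 0 < t := lt_trans hLmpos ht
  set c0 := 1 - Real.exp (-(β * Real.log 3)) with hc0def
  have hc0pos : 0 < c0 := by
    have : Real.exp (-(β * Real.log 3)) < 1 := by
      rw [Real.exp_lt_one_iff]; nlinarith
    linarith
  set q := β * Real.log 2 / 3 with hqdef
  have hqpos : 0 < q := by positivity
  -- cast identities
  have e0 : ell β m = Real.exp (-Lm) := by rw [ell]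
  have e1 : ell β (m + 1) = Real.exp (-(β * ((m:ℝ) + 2) * a3)) := by
    rw [ell, show ((m + 1 : ℕ) : ℝ) + 1 = (m:ℝ) + 2 by push_cast; ring,
      show ((m + 1 : ℕ) : ℝ) + 2 = (m:ℝ) + 3 by push_cast; ring]
  have e2 : ell β (m + 2) = Real.exp (-(β * ((m:ℝ) + 3) * a4)) := by
    rw [ell, show ((m + 2 : ℕ) : ℝ) + 1 = (m:ℝ) + 3 by push_cast; ring,
      show ((m + 2 : ℕ) : ℝ) + 2 = (m:ℝ) + 4 by push_cast; ring]
  -- Step A : ell (m+2) ≤ (1 - c0) * ell (m+1)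
  have hA : ell β (m + 2) ≤ (1 - c0) * ell β (m + 1) := by
    have h1c0 : 1 - c0 = Real.exp (-(β * Real.log 3)) := by rw [hc0def]; ring
    rw [e1, e2, h1c0, ← Real.exp_add]
    apply Real.exp_le_exp.2
    nlinarith [mul_le_mul_of_nonneg_left ha34 (show (0:ℝ) ≤ β * ((m:ℝ) + 2) by positivity),
      mul_le_mul_of_nonneg_left hlog3a4 hβ.le]
  -- Step B : exp(-β) * exp(-(β a3)) * ell m ≤ ell (m+1)
  have hB : Real.exp (-β) * Real.exp (-(β * a3)) * ell β m ≤ ell β (m + 1) := by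
    rw [e0, e1, ← Real.exp_add, ← Real.exp_add]
    apply Real.exp_le_exp.2
    have hfrac : β * ((m:ℝ) + 1) * (1 / ((m:ℝ) + 2)) ≤ β := by
      rw [mul_one_div, div_le_iff₀ (by linarith : (0:ℝ) < (m:ℝ) + 2)]
      nlinarith
    have hmul := mul_le_mul_of_nonneg_left ha3le
      (show (0:ℝ) ≤ β * ((m:ℝ) + 1) by positivity)
    have hexp1 : β * ((m:ℝ) + 1) * (a2 + 1 / ((m:ℝ) + 2))
        = β * ((m:ℝ) + 1) * a2 + β * ((m:ℝ) + 1) * (1 / ((m:ℝ) + 2)) := by ring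
    have key1 : β * ((m:ℝ) + 1) * a3 ≤ β * ((m:ℝ) + 1) * a2 + β := by
      rw [hexp1] at hmul; linarith
    have hexp2 : β * ((m:ℝ) + 2) * a3 = β * ((m:ℝ) + 1) * a3 + β * a3 := by ring
    linarith [hLmdef.ge, hLmdef.le]
  -- Step C : t ^ (-β) ≤ Lm ^ (-β)
  have hC : t ^ (-β) ≤ Lm ^ (-β) :=
    Real.rpow_le_rpow_of_nonpos hLmpos ht.le (neg_nonpos.2 hβ.le)
  -- Step D : q ^ β * Lm ^ (-β) ≤ exp (-(β * a3))
  have hD : q ^ β * Lm ^ (-β) ≤ Real.exp (-(β * a3)) := by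
    have hm3pos : (0:ℝ) < (m:ℝ) + 3 := by linarith
    have hqLm : q ≤ Lm / ((m:ℝ) + 3) := by
      rw [le_div_iff₀ hm3pos, hqdef, hLmdef]
      have hh1 := mul_le_mul_of_nonneg_left ha2
        (show (0:ℝ) ≤ β * ((m:ℝ) + 1) by positivity)
      have hh2 := mul_le_mul_of_nonneg_left
        (show (m:ℝ) + 3 ≤ 3 * ((m:ℝ) + 1) by linarith) (mul_pos hβ hlog2).le
      have hh3 : β * Real.log 2 * (3 * ((m:ℝ) + 1)) = 3 * (β * ((m:ℝ) + 1) * Real.log 2) := by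
        ring
      rw [hh3] at hh2
      linarith
    have h1 : q ^ β ≤ (Lm / ((m:ℝ) + 3)) ^ β := Real.rpow_le_rpow hqpos.le hqLm hβ.le
    rw [Real.div_rpow hLmpos.le hm3pos.le] at h1
    have h3 : Real.exp (-(β * a3)) = ((m:ℝ) + 3) ^ (-β) := by
      rw [Real.rpow_def_of_pos hm3pos]
      congr 1
      rw [← ha3def]; ring
    rw [h3, Real.rpow_neg hLmpos.le, Real.rpow_neg hm3pos.le]
    have hX : 0 < Lm ^ β := Real.rpow_pos_of_pos hLmpos β
    have hY : 0 < ((m:ℝ) + 3) ^ β := Real.rpow_pos_of_pos hm3pos β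
    have h4 : q ^ β * ((m:ℝ) + 3) ^ β ≤ Lm ^ β := by
      rw [← le_div_iff₀ hY]; exact h1
    rw [← div_eq_mul_inv, inv_eq_one_div, div_le_div_iff₀ hX hY]
    linarith
  -- nonnegativity facts
  have hqβ : (0:ℝ) ≤ q ^ β := (Real.rpow_pos_of_pos hqpos β).le
  have hexpβ : (0:ℝ) ≤ Real.exp (-β) := (Real.exp_pos _).le
  have htneg : (0:ℝ) ≤ t ^ (-β) := Real.rpow_nonneg htpos.le _
  have hLneg : (0:ℝ) ≤ Lm ^ (-β) := Real.rpow_nonneg hLmpos.le _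
  have hrt : r * t ^ (-β) ≤ ell β m * Lm ^ (-β) :=
    mul_le_mul hrm.le hC htneg (ell_pos m).le
  have hCc : Cconst β = c0 * Real.exp (-β) * q ^ β := rfl
  calc Cconst β * r * t ^ (-β)
      = (c0 * Real.exp (-β) * q ^ β) * (r * t ^ (-β)) := by rw [hCc]; ring
    _ ≤ (c0 * Real.exp (-β) * q ^ β) * (ell β m * Lm ^ (-β)) := by
        apply mul_le_mul_of_nonneg_left hrt
        have := hc0pos.le
        positivity
    _ = (c0 * (Real.exp (-β) * ell β m)) * (q ^ β * Lm ^ (-β)) := by ring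
    _ ≤ (c0 * (Real.exp (-β) * ell β m)) * Real.exp (-(β * a3)) := by
        apply mul_le_mul_of_nonneg_left hD
        have h1 := hc0pos.le
        have h2 := (ell_pos (β := β) m).le
        positivity
    _ = c0 * (Real.exp (-β) * Real.exp (-(β * a3)) * ell β m) := by ring
    _ ≤ c0 * ell β (m + 1) := mul_le_mul_of_nonneg_left hB hc0pos.le
    _ ≤ ell β (m + 1) - ell β (m + 2) := by nlinarith [ell_pos (β := β) (m + 1)]
    _ = gfun β (m + 1) := by rw [gfun]

end Key

end AuxAll

/-- A set `E ⊆ ℂ` satisfies condition `(U)_{2,β}`. -/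
def CondU2 (E : Set ℂ) (β : ℝ) : Prop :=
  ∃ C > (0 : ℝ), ∃ r₀ > (0 : ℝ), ∀ a ∈ E, ∀ r ∈ Set.Ioo (0 : ℝ) r₀,
    ({z : ℂ | C * r * (Real.log (1 / r)) ^ (-β) ≤ dist z a ∧ dist z a ≤ r} ∩ E).Nonempty

/-- For every `β > 0` there is a nonempty compact set `E ⊆ ℂ` of Hausdorff
dimension `0` satisfying condition `(U)_{2,β}`. -/
theorem stmt_19 (β : ℝ) (hβ : 0 < β) :
    ∃ E : Set ℂ, E.Nonempty ∧ IsCompact E ∧ dimH E = 0 ∧ CondU2 E β := by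
  classical
  refine ⟨ESet β, ESet_nonempty hβ, ESet_compact hβ, ESet_dimH hβ, ?_⟩
  refine ⟨Cconst β, Cconst_pos hβ, ell β 0, ell_pos 0, ?_⟩
  rintro a ⟨ε, rfl⟩ r ⟨hr0, hr1⟩
  have hex : ∃ n, ell β n ≤ r := by
    obtain ⟨n, hn⟩ := ((ell_tendsto hβ).eventually (gt_mem_nhds hr0)).exists
    exact ⟨n, hn.le⟩
  have hn₀ : ell β (Nat.find hex) ≤ r := Nat.find_spec hex
  have hn₀pos : Nat.find hex ≠ 0 := by
    intro h
    rw [h] at hn₀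
    linarith
  obtain ⟨m, hm⟩ : ∃ m, Nat.find hex = m + 1 := ⟨Nat.find hex - 1, by omega⟩
  have hrm : r < ell β m := by
    have := Nat.find_min hex (m := m) (by omega)
    exact lt_of_not_ge this
  have h1 : ell β (m + 1) ≤ r := by rw [← hm]; exact hn₀
  refine ⟨Ffun β (flipAt ε (m + 1)), ⟨?_, ?_⟩, ⟨_, rfl⟩⟩
  · show Cconst β * r * (Real.log (1 / r)) ^ (-β)
        ≤ dist (Ffun β (flipAt ε (m + 1))) (Ffun β ε)
    rw [dist_Ffun hβ, cf_flip_dist hβ]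
    exact key_ineq hβ m hr0 hrm
  · show dist (Ffun β (flipAt ε (m + 1))) (Ffun β ε) ≤ r
    rw [dist_Ffun hβ, cf_flip_dist hβ]
    have := ell_pos (β := β) (m + 2)
    have hg : gfun β (m + 1) = ell β (m + 1) - ell β (m + 2) := rfl
    linarith [hg.le, hg.ge]
end
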